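/- For data y ∈ T^N on the circle T = S¹ (with arc-length distance d_T), nonnegative weights w, and α > 0, the minimum of T(x) = α Σ_{n=1}^{N-1} d_T(x_n, x_{n+1}) + Σ_{n=1}^N w_n d_T(x_n, y_n) over all x ∈ T^N equals the minimum over x ∈ V^N, where V = Val(y) ∪ Val(ỹ) is the set of data values together with their antipodal points. -/
import Mathlib


open Finset

/-- Arc-length (geodesic) distance on the circle `S¹ = ℝ/2πℤ`. -/
noncomputable def arcDist (a b : Real.Angle) : ℝ := |(a - b).toReal|

/-- The univariate `L¹`-TV functional for circle-valued data. -/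
noncomputable def l1tvCirc (N : ℕ) (α : ℝ) (w : Fin N → ℝ) (y : Fin N → Real.Angle)
    (x : Fin N → Real.Angle) : ℝ :=
  α * ∑ i : Fin (N - 1),
      arcDist (x ⟨i, by have := i.isLt; omega⟩) (x ⟨(i : ℕ) + 1, by have := i.isLt; omega⟩) +
    ∑ n, w n * arcDist (x n) (y n)

lemma abs_toReal_coe_le (r : ℝ) : |((r : Real.Angle)).toReal| ≤ |r| := by
  set a := ((r : Real.Angle)).toReal with ha
  have h1 : ((a : ℝ) : Real.Angle) = (r : Real.Angle) := Real.Angle.coe_toReal _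
  obtain ⟨k, hk⟩ := Real.Angle.angle_eq_iff_two_pi_dvd_sub.mp h1
  have hpi : |a| ≤ Real.pi := Real.Angle.abs_toReal_le_pi _
  rcases eq_or_ne k 0 with h0 | h0
  · simp [h0] at hk
    have : a = r := by linarith
    simp [this]
  · have hk1 : (1:ℝ) ≤ |(k:ℝ)| := by exact_mod_cast Int.one_le_abs h0
    have habs : |2 * Real.pi * (k:ℝ)| - |a| ≤ |2 * Real.pi * (k:ℝ) - a| :=
      abs_sub_abs_le_abs_sub _ _
    have h2 : 2 * Real.pi * (k:ℝ) - a = -r := by linarith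
    have h3 : |2 * Real.pi * (k:ℝ)| = 2 * Real.pi * |(k:ℝ)| := by
      rw [abs_mul, abs_of_pos (by positivity : (0:ℝ) < 2 * Real.pi)]
    rw [h2, abs_neg, h3] at habs
    nlinarith [Real.pi_pos]

lemma abs_toReal_neg (θ : Real.Angle) : |(-θ).toReal| = |θ.toReal| := by
  set b := (-θ).toReal with hb
  set a := θ.toReal with haa
  have h1 : ((b : ℝ) : Real.Angle) = ((-a : ℝ) : Real.Angle) := by
    rw [Real.Angle.coe_neg, Real.Angle.coe_toReal, Real.Angle.coe_toReal]
  obtain ⟨k, hk⟩ := Real.Angle.angle_eq_iff_two_pi_dvd_sub.mp h1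
  have hpa : |a| ≤ Real.pi := Real.Angle.abs_toReal_le_pi _
  have hpb : |b| ≤ Real.pi := Real.Angle.abs_toReal_le_pi _
  rcases eq_or_ne k 0 with h0 | h0
  · simp [h0] at hk
    have : b = -a := by linarith
    simp [this]
  · have hk1 : (1:ℝ) ≤ |(k:ℝ)| := by exact_mod_cast Int.one_le_abs h0
    have h3 : |2 * Real.pi * (k:ℝ)| = 2 * Real.pi * |(k:ℝ)| := by
      rw [abs_mul, abs_of_pos (by positivity : (0:ℝ) < 2 * Real.pi)]
    have h4 : |b + a| ≤ |b| + |a| := abs_add_le _ _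
    have h5 : b + a = 2 * Real.pi * (k:ℝ) := by linarith
    rw [h5, h3] at h4
    have hpi := Real.pi_pos
    have h6 : 2 * Real.pi ≤ |b| + |a| := by nlinarith
    have hba : |b| = Real.pi := by cases abs_cases b <;> cases abs_cases a <;> linarith
    have haa2 : |a| = Real.pi := by cases abs_cases b <;> cases abs_cases a <;> linarith
    rw [hba, haa2]

lemma arcDist_comm (a b : Real.Angle) : arcDist a b = arcDist b a := by
  unfold arcDist
  rw [show b - a = -(a - b) by abel, abs_toReal_neg]

lemma arcDist_self (a : Real.Angle) : arcDist a a = 0 := by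
  simp [arcDist]

lemma arcDist_le (a b : Real.Angle) (r : ℝ) (h : ((r:ℝ) : Real.Angle) = a - b) :
    arcDist a b ≤ |r| := by
  unfold arcDist
  rw [← h]
  exact abs_toReal_coe_le r



lemma list_sum_map_add {ι : Type*} (l : List ι) (f g : ι → ℝ) :
    (l.map (fun i => f i + g i)).sum = (l.map f).sum + (l.map g).sum := by
  induction l with
  | nil => simp
  | cons h t ih => simp only [List.map_cons, List.sum_cons, ih]; ring

lemma aux_sum (l : List (ℝ × ℝ)) (a : ℝ) :
    (l.map (fun dq => dq.1 * (if dq.2 < 0 then a else -a))).sum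
      = a * (l.map (fun dq => if dq.2 < 0 then dq.1 else -dq.1)).sum := by
  induction l with
  | nil => simp
  | cons h t ih =>
    simp only [List.map_cons, List.sum_cons, ih]
    by_cases hh : h.2 < 0 <;> simp only [hh, if_true, if_false] <;> ring

/-- Weighted median lemma on ℝ: some data point is at least as good as 0. -/
lemma real_median (l : List (ℝ × ℝ)) (hl : ∀ cp ∈ l, 0 ≤ cp.1) (hne : l ≠ []) :
    ∃ cp ∈ l, (l.map (fun dq => dq.1 * |cp.2 - dq.2|)).sum
      ≤ (l.map (fun dq => dq.1 * |dq.2|)).sum := by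
  classical
  set D := (l.map (fun dq => if dq.2 < 0 then dq.1 else -dq.1)).sum with hD
  have step : ∀ cp ∈ l, (∀ dq ∈ l,
        dq.1 * |cp.2 - dq.2| ≤ dq.1 * |dq.2| + dq.1 * (if dq.2 < 0 then cp.2 else -cp.2)) →
      cp.2 * D ≤ 0 →
      (l.map (fun dq => dq.1 * |cp.2 - dq.2|)).sum ≤ (l.map (fun dq => dq.1 * |dq.2|)).sum := by
    intro cp hcp hterm hsign
    have h1 : (l.map (fun dq => dq.1 * |cp.2 - dq.2|)).sum
        ≤ (l.map (fun dq => dq.1 * |dq.2| + dq.1 * (if dq.2 < 0 then cp.2 else -cp.2))).sum :=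
      List.sum_le_sum hterm
    rw [list_sum_map_add, aux_sum, ← hD] at h1
    linarith
  -- termwise bounds, packaged
  have termNeg : ∀ (a : ℝ) (dq : ℝ × ℝ), 0 ≤ dq.1 → dq.2 < 0 → dq.2 ≤ a →
      dq.1 * |a - dq.2| ≤ dq.1 * |dq.2| + dq.1 * a := by
    intro a dq hw hneg hle
    have : |a - dq.2| = |dq.2| + a := by
      rw [abs_of_nonneg (by linarith), abs_of_neg hneg]; ring
    rw [this]; nlinarith
  have termPos : ∀ (a : ℝ) (dq : ℝ × ℝ), 0 ≤ dq.1 → 0 ≤ dq.2 → a ≤ dq.2 →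
      dq.1 * |a - dq.2| ≤ dq.1 * |dq.2| + dq.1 * (-a) := by
    intro a dq hw hpos hle
    have : |a - dq.2| = |dq.2| - a := by
      rw [abs_of_nonpos (by linarith), abs_of_nonneg hpos]; ring
    rw [this]; nlinarith
  by_cases hDle : D ≤ 0
  · by_cases hP : ∃ dq ∈ l, 0 ≤ dq.2
    · -- min of nonnegative values
      obtain ⟨dq0, hdq0, hdq0n⟩ := hP
      set vals := ((l.map Prod.snd).toFinset).filter (fun v => 0 ≤ v) with hvals
      have hvne : vals.Nonempty :=
        ⟨dq0.2, Finset.mem_filter.mpr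
          ⟨List.mem_toFinset.mpr (List.mem_map.mpr ⟨dq0, hdq0, rfl⟩), hdq0n⟩⟩
      have hamem := vals.min'_mem hvne
      have h0a : 0 ≤ vals.min' hvne := (Finset.mem_filter.mp hamem).2
      obtain ⟨cp, hcpl, hcpa⟩ := List.mem_map.mp
        (List.mem_toFinset.mp (Finset.mem_filter.mp hamem).1)
      refine ⟨cp, hcpl, step cp hcpl ?_ ?_⟩
      · intro dq hdq
        by_cases hneg : dq.2 < 0
        · rw [if_pos hneg]
          have h0cp : 0 ≤ cp.2 := hcpa ▸ h0a
          exact termNeg _ dq (hl dq hdq) hneg (by linarith)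
        · push_neg at hneg
          rw [if_neg (not_lt.mpr hneg)]
          have hle : cp.2 ≤ dq.2 := by
            rw [hcpa]
            exact vals.min'_le _ (Finset.mem_filter.mpr
              ⟨List.mem_toFinset.mpr (List.mem_map.mpr ⟨dq, hdq, rfl⟩), hneg⟩)
          exact termPos _ dq (hl dq hdq) hneg hle
      · rw [hcpa]; nlinarith
    · -- all values negative
      have hP' : ∀ dq ∈ l, dq.2 < 0 := fun dq hdq =>
        lt_of_not_ge (fun h => hP ⟨dq, hdq, h⟩)
      have hD0 : 0 ≤ D := by
        rw [hD]
        apply List.sum_nonneg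
        intro x hx
        obtain ⟨dq, hdq, rfl⟩ := List.mem_map.mp hx
        rw [if_pos (hP' dq hdq)]
        exact hl dq hdq
      set vals := (l.map Prod.snd).toFinset with hvals
      have hvne : vals.Nonempty := by
        rcases List.exists_mem_of_ne_nil _ hne with ⟨v, hv⟩
        exact ⟨v.2, List.mem_toFinset.mpr (List.mem_map.mpr ⟨v, hv, rfl⟩)⟩
      obtain ⟨cp, hcpl, hcpa⟩ := List.mem_map.mp (List.mem_toFinset.mp (vals.max'_mem hvne))
      refine ⟨cp, hcpl, step cp hcpl ?_ ?_⟩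
      · intro dq hdq
        rw [if_pos (hP' dq hdq)]
        have hle : dq.2 ≤ cp.2 := by
          rw [hcpa]
          exact vals.le_max' _ (List.mem_toFinset.mpr (List.mem_map.mpr ⟨dq, hdq, rfl⟩))
        exact termNeg _ dq (hl dq hdq) (hP' dq hdq) hle
      · have : D = 0 := le_antisymm hDle hD0
        rw [this]; simp
  · -- D > 0 : negative side nonempty; choose max of negative values
    push_neg at hDle
    have hN : ∃ dq ∈ l, dq.2 < 0 := by
      by_contra hc
      push_neg at hc
      have h' : (l.map (fun dq => if dq.2 < 0 then dq.1 else -dq.1)).sum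
          ≤ (l.map (fun _ => (0:ℝ))).sum :=
        List.sum_le_sum (fun dq hdq => by
          rw [if_neg (not_lt.mpr (hc dq hdq))]; linarith [hl dq hdq])
      simp only [List.map_const', List.sum_replicate, smul_zero] at h'
      rw [← hD] at h'
      linarith
    obtain ⟨dq0, hdq0, hdq0n⟩ := hN
    set vals := ((l.map Prod.snd).toFinset).filter (fun v => v < 0) with hvals
    have hvne : vals.Nonempty :=
      ⟨dq0.2, Finset.mem_filter.mpr
        ⟨List.mem_toFinset.mpr (List.mem_map.mpr ⟨dq0, hdq0, rfl⟩), hdq0n⟩⟩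
    have hamem := vals.max'_mem hvne
    have h0a : vals.max' hvne < 0 := (Finset.mem_filter.mp hamem).2
    obtain ⟨cp, hcpl, hcpa⟩ := List.mem_map.mp
      (List.mem_toFinset.mp (Finset.mem_filter.mp hamem).1)
    refine ⟨cp, hcpl, step cp hcpl ?_ ?_⟩
    · intro dq hdq
      by_cases hneg : dq.2 < 0
      · rw [if_pos hneg]
        have hle : dq.2 ≤ cp.2 := by
          rw [hcpa]
          exact vals.le_max' _ (Finset.mem_filter.mpr
            ⟨List.mem_toFinset.mpr (List.mem_map.mpr ⟨dq, hdq, rfl⟩), hneg⟩)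
        exact termNeg _ dq (hl dq hdq) hneg hle
      · push_neg at hneg
        rw [if_neg (not_lt.mpr hneg)]
        have hle : cp.2 ≤ dq.2 := by rw [hcpa]; linarith
        exact termPos _ dq (hl dq hdq) hneg hle
    · rw [hcpa]; nlinarith

/-- Circle median lemma: some point of `S` is at least as good as `t`. -/
lemma circ_median (l : List (ℝ × Real.Angle)) (hl : ∀ cp ∈ l, 0 ≤ cp.1)
    (S : Finset Real.Angle) (hS : S.Nonempty) (hlS : ∀ cp ∈ l, cp.2 ∈ S) (t : Real.Angle) :
    ∃ s ∈ S, (l.map (fun cp => cp.1 * arcDist s cp.2)).sum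
      ≤ (l.map (fun cp => cp.1 * arcDist t cp.2)).sum := by
  rcases eq_or_ne l [] with rfl | hne
  · exact ⟨hS.choose, hS.choose_spec, by simp⟩
  · set m := l.map (fun cp => (cp.1, (cp.2 - t).toReal)) with hm
    have hmnn : ∀ cp ∈ m, 0 ≤ cp.1 := by
      intro cp hcp
      obtain ⟨dq, hdq, rfl⟩ := List.mem_map.mp hcp
      exact hl dq hdq
    have hmne : m ≠ [] := by
      simp only [hm, ne_eq, List.map_eq_nil_iff]; exact hne
    obtain ⟨cp', hcp'm, hsum⟩ := real_median m hmnn hmne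
    obtain ⟨cp, hcpl, rfl⟩ := List.mem_map.mp hcp'm
    refine ⟨cp.2, hlS cp hcpl, ?_⟩
    have e1 : (m.map (fun dq => dq.1 * |((cp.2 - t).toReal) - dq.2|)).sum
        = (l.map (fun dq => dq.1 * |(cp.2 - t).toReal - (dq.2 - t).toReal|)).sum := by
      rw [hm, List.map_map]
      rfl
    have e2 : (m.map (fun dq => dq.1 * |dq.2|)).sum
        = (l.map (fun dq => dq.1 * |(dq.2 - t).toReal|)).sum := by
      rw [hm, List.map_map]
      rfl
    rw [e1, e2] at hsum
    calc (l.map (fun dq => dq.1 * arcDist cp.2 dq.2)).sum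
        ≤ (l.map (fun dq => dq.1 * |(cp.2 - t).toReal - (dq.2 - t).toReal|)).sum := by
          apply List.sum_le_sum
          intro dq hdq
          apply mul_le_mul_of_nonneg_left _ (hl dq hdq)
          apply arcDist_le
          rw [Real.Angle.coe_sub, Real.Angle.coe_toReal, Real.Angle.coe_toReal]
          abel
      _ ≤ (l.map (fun dq => dq.1 * |(dq.2 - t).toReal|)).sum := hsum
      _ = (l.map (fun dq => dq.1 * arcDist t dq.2)).sum := by
          congr 1
          apply List.map_congr_left
          intro dq _
          have : t - dq.2 = -(dq.2 - t) := by abel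
          rw [arcDist, this, abs_toReal_neg]

noncomputable def listTerm (l : List (ℝ × Real.Angle)) (t : Real.Angle) : ℝ :=
  (l.map (fun cp => cp.1 * arcDist t cp.2)).sum

lemma listTerm_cons (c : ℝ) (p : Real.Angle) (l : List (ℝ × Real.Angle)) (t : Real.Angle) :
    listTerm ((c, p) :: l) t = c * arcDist t p + listTerm l t := by
  simp [listTerm]

lemma listTerm_append (l₁ l₂ : List (ℝ × Real.Angle)) (t : Real.Angle) :
    listTerm (l₁ ++ l₂) t = listTerm l₁ t + listTerm l₂ t := by
  simp [listTerm]

noncomputable def Gfun (α : ℝ) (N : ℕ) (L : Fin (N+1) → List (ℝ × Real.Angle))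
    (x : Fin (N+1) → Real.Angle) : ℝ :=
  α * ∑ i : Fin N, arcDist (x i.castSucc) (x i.succ) + ∑ n, listTerm (L n) (x n)

lemma Gexp (α : ℝ) (N : ℕ) (L : Fin (N+2) → List (ℝ × Real.Angle))
    (x : Fin (N+2) → Real.Angle) :
    Gfun α (N+1) L x = α * arcDist (x 0) (x 1) + listTerm (L 0) (x 0)
      + Gfun α N (fun i => L i.succ) (fun i => x i.succ) := by
  unfold Gfun
  rw [Fin.sum_univ_succ (f := fun i : Fin (N+1) => arcDist (x i.castSucc) (x i.succ)),
    Fin.sum_univ_succ (f := fun n : Fin (N+2) => listTerm (L n) (x n))]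
  simp only [Fin.castSucc_zero, Fin.succ_zero_eq_one, Fin.succ_castSucc]
  ring

/-- Auxiliary: adding one data pair at coordinate 0. -/
lemma Gcons (α : ℝ) (N : ℕ) (c : ℝ) (p : Real.Angle)
    (L : Fin (N+1) → List (ℝ × Real.Angle)) (z : Fin (N+1) → Real.Angle) :
    Gfun α N (Fin.cases ((c, p) :: L 0) (fun i : Fin N => L i.succ)) z
      = c * arcDist (z 0) p + Gfun α N L z := by
  unfold Gfun
  rw [Fin.sum_univ_succ (f := fun n : Fin (N+1) =>
      listTerm ((Fin.cases ((c, p) :: L 0) (fun i : Fin N => L i.succ) : ∀ _, _) n) (z n)),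
    Fin.sum_univ_succ (f := fun n : Fin (N+1) => listTerm (L n) (z n))]
  simp only [Fin.cases_zero, Fin.cases_succ, listTerm_cons]
  ring

/-- Auxiliary: appending data at coordinate 0. -/
lemma Gappend (α : ℝ) (N : ℕ) (l : List (ℝ × Real.Angle))
    (L : Fin (N+1) → List (ℝ × Real.Angle)) (z : Fin (N+1) → Real.Angle) :
    Gfun α N (Fin.cases (l ++ L 0) (fun i : Fin N => L i.succ)) z
      = listTerm l (z 0) + Gfun α N L z := by
  unfold Gfun
  rw [Fin.sum_univ_succ (f := fun n : Fin (N+1) =>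
      listTerm ((Fin.cases (l ++ L 0) (fun i : Fin N => L i.succ) : ∀ _, _) n) (z n)),
    Fin.sum_univ_succ (f := fun n : Fin (N+1) => listTerm (L n) (z n))]
  simp only [Fin.cases_zero, Fin.cases_succ, listTerm_append]
  ring

lemma key (α : ℝ) (hα : 0 ≤ α) (S : Finset Real.Angle) (hS : S.Nonempty) :
    ∀ N (L : Fin (N+1) → List (ℝ × Real.Angle)),
      (∀ n, ∀ cp ∈ L n, 0 ≤ cp.1 ∧ cp.2 ∈ S) →
      ∀ x : Fin (N+1) → Real.Angle,
        ∃ x', (∀ n, x' n ∈ S) ∧ Gfun α N L x' ≤ Gfun α N L x := by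
  classical
  intro N
  induction N with
  | zero =>
    intro L hL x
    obtain ⟨s, hsS, hs⟩ := circ_median (L 0) (fun cp h => (hL 0 cp h).1) S hS
      (fun cp h => (hL 0 cp h).2) (x 0)
    refine ⟨fun _ => s, fun _ => hsS, ?_⟩
    unfold Gfun
    simpa only [Finset.univ_eq_empty, Finset.sum_empty, mul_zero, zero_add,
      Fin.sum_univ_succ, Fin.sum_univ_zero, add_zero, listTerm] using hs
  | succ N ih =>
    intro L hL x
    set b := x 1 with hb
    have hcons : ∀ cp ∈ ((α, b) :: L 0), 0 ≤ cp.1 := by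
      intro cp hcp
      rcases List.mem_cons.mp hcp with rfl | h
      · exact hα
      · exact (hL 0 cp h).1
    have hpts : ∀ cp ∈ ((α, b) :: L 0), cp.2 ∈ insert b S := by
      intro cp hcp
      rcases List.mem_cons.mp hcp with rfl | h
      · exact Finset.mem_insert_self _ _
      · exact Finset.mem_insert_of_mem (hL 0 cp h).2
    obtain ⟨s, hsS', hs⟩ := circ_median ((α, b) :: L 0) hcons (insert b S)
      ⟨b, Finset.mem_insert_self _ _⟩ hpts (x 0)
    rw [show ∀ t, ((((α, b) :: L 0)).map (fun cp => cp.1 * arcDist t cp.2)).sum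
        = α * arcDist t b + listTerm (L 0) t from fun t => by simp [listTerm],
      show ((((α, b) :: L 0)).map (fun cp => cp.1 * arcDist (x 0) cp.2)).sum
        = α * arcDist (x 0) b + listTerm (L 0) (x 0) from by simp [listTerm]] at hs
    set M : Fin (N+1) → List (ℝ × Real.Angle) := fun i => L i.succ with hM
    have hsucc1 : (Fin.succ (0 : Fin (N+1))) = (1 : Fin (N+2)) := Fin.succ_zero_eq_one
    by_cases hsS : s ∈ S
    · -- new head value s ∈ S becomes an anchor for the tail problem
      set L' : Fin (N+1) → List (ℝ × Real.Angle) :=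
        Fin.cases ((α, s) :: M 0) (fun i : Fin N => M i.succ) with hL'def
      have hL' : ∀ n, ∀ cp ∈ L' n, 0 ≤ cp.1 ∧ cp.2 ∈ S := by
        intro n
        refine Fin.cases ?_ ?_ n
        · intro cp hcp
          simp only [hL'def, Fin.cases_zero] at hcp
          rcases List.mem_cons.mp hcp with rfl | h
          · exact ⟨hα, hsS⟩
          · exact hL _ cp h
        · intro i cp hcp
          simp only [hL'def, Fin.cases_succ] at hcp
          exact hL _ cp hcp
      obtain ⟨x'', hx''S, hx''⟩ := ih L' hL' (fun i => x i.succ)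
      set x' : Fin (N+2) → Real.Angle := Fin.cases s x'' with hx'def
      refine ⟨x', ?_, ?_⟩
      · intro n
        refine Fin.cases ?_ ?_ n
        · simp only [hx'def, Fin.cases_zero]; exact hsS
        · intro i; simp only [hx'def, Fin.cases_succ]; exact hx''S i
      · have e0 : x' 0 = s := by simp only [hx'def, Fin.cases_zero]
        have e1 : x' 1 = x'' 0 := by
          simp only [hx'def, ← hsucc1, Fin.cases_succ]
        have etail : (fun i : Fin (N+1) => x' i.succ) = x'' :=
          funext fun i => by simp only [hx'def, Fin.cases_succ]
        have eG1 : Gfun α (N+1) L x' = α * arcDist s (x'' 0) + listTerm (L 0) s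
            + Gfun α N M x'' := by
          rw [Gexp, e0, e1, ← hM, etail]
        have eG2 : Gfun α N L' x'' = α * arcDist (x'' 0) s + Gfun α N M x'' := by
          rw [hL'def]; exact Gcons α N α s M x''
        have eG3 : Gfun α N L' (fun i => x i.succ)
            = α * arcDist (x 1) s + Gfun α N M (fun i => x i.succ) := by
          simpa only [hsucc1] using Gcons α N α s M (fun i => x i.succ)
        have eG4 : Gfun α (N+1) L x = α * arcDist (x 0) (x 1) + listTerm (L 0) (x 0)
            + Gfun α N M (fun i => x i.succ) := by
          rw [Gexp, hM]
        have c1 : α * arcDist s (x'' 0) = α * arcDist (x'' 0) s := by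
          rw [arcDist_comm]
        have c2 : α * arcDist (x 1) s = α * arcDist s (x 1) := by
          rw [arcDist_comm]
        have c3 : arcDist s b = arcDist s (x 1) := by rw [hb]
        rw [eG2, eG3] at hx''
        rw [eG1, eG4]
        rw [c3, hb] at hs
        linarith
    · -- s = b : merge the first two coordinates
      have hsb : s = b := by
        rcases Finset.mem_insert.mp hsS' with h | h
        · exact h
        · exact absurd h hsS
      set L'' : Fin (N+1) → List (ℝ × Real.Angle) :=
        Fin.cases (L 0 ++ M 0) (fun i : Fin N => M i.succ) with hL''def
      have hL'' : ∀ n, ∀ cp ∈ L'' n, 0 ≤ cp.1 ∧ cp.2 ∈ S := by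
        intro n
        refine Fin.cases ?_ ?_ n
        · intro cp hcp
          simp only [hL''def, Fin.cases_zero] at hcp
          rcases List.mem_append.mp hcp with h | h
          · exact hL _ cp h
          · exact hL _ cp h
        · intro i cp hcp
          simp only [hL''def, Fin.cases_succ] at hcp
          exact hL _ cp hcp
      obtain ⟨x'', hx''S, hx''⟩ := ih L'' hL'' (fun i => x i.succ)
      set x' : Fin (N+2) → Real.Angle := Fin.cases (x'' 0) x'' with hx'def
      refine ⟨x', ?_, ?_⟩
      · intro n
        refine Fin.cases ?_ ?_ n
        · simp only [hx'def, Fin.cases_zero]; exact hx''S 0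
        · intro i; simp only [hx'def, Fin.cases_succ]; exact hx''S i
      · have e0 : x' 0 = x'' 0 := by simp only [hx'def, Fin.cases_zero]
        have e1 : x' 1 = x'' 0 := by
          simp only [hx'def, ← hsucc1, Fin.cases_succ]
        have etail : (fun i : Fin (N+1) => x' i.succ) = x'' :=
          funext fun i => by simp only [hx'def, Fin.cases_succ]
        have eG1 : Gfun α (N+1) L x' = listTerm (L 0) (x'' 0) + Gfun α N M x'' := by
          rw [Gexp, e0, e1, ← hM, etail, arcDist_self]; ring
        have eG2 : Gfun α N L'' x'' = listTerm (L 0) (x'' 0) + Gfun α N M x'' := by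
          rw [hL''def]; exact Gappend α N (L 0) M x''
        have eG3 : Gfun α N L'' (fun i => x i.succ)
            = listTerm (L 0) (x 1) + Gfun α N M (fun i => x i.succ) := by
          simpa only [hsucc1] using Gappend α N (L 0) M (fun i => x i.succ)
        have eG4 : Gfun α (N+1) L x = α * arcDist (x 0) (x 1) + listTerm (L 0) (x 0)
            + Gfun α N M (fun i => x i.succ) := by
          rw [Gexp, hM]
        rw [eG2, eG3] at hx''
        rw [eG1, eG4]
        have hs' : α * arcDist (x 1) (x 1) + listTerm (L 0) (x 1)
            ≤ α * arcDist (x 0) (x 1) + listTerm (L 0) (x 0) := by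
          rw [hsb, hb] at hs; exact hs
        rw [arcDist_self] at hs'
        linarith


/-- Search-space reduction for circle-valued `L¹`-TV: the minimum over `T^N` equals the
minimum over `V^N` where `V = Val(y) ∪ Val(ỹ)` consists of the data values and their
antipodal points; in particular a global minimizer with values in `V` exists. -/
theorem l1tv_circle_min_attained_on_data_values_and_antipodes
    (N : ℕ) (hN : 1 ≤ N) (y : Fin N → Real.Angle) (w : Fin N → ℝ)
    (hw : ∀ n, 0 ≤ w n) (α : ℝ) (hα : 0 < α) :
    ∃ x' : Fin N → Real.Angle,
      (∀ n, x' n ∈ Set.range y ∪ Set.range (fun i => y i + (Real.pi : Real.Angle))) ∧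
      ∀ x : Fin N → Real.Angle, l1tvCirc N α w y x' ≤ l1tvCirc N α w y x := by
  classical
  obtain ⟨M, rfl⟩ : ∃ M, N = M + 1 := ⟨N - 1, by omega⟩
  set S : Finset Real.Angle := Finset.image y Finset.univ with hSdef
  have hS : S.Nonempty := ⟨y 0, Finset.mem_image_of_mem y (Finset.mem_univ 0)⟩
  set L : Fin (M+1) → List (ℝ × Real.Angle) := fun n => [(w n, y n)] with hLdef
  have hL : ∀ n, ∀ cp ∈ L n, 0 ≤ cp.1 ∧ cp.2 ∈ S := by
    intro n cp hcp
    simp only [hLdef, List.mem_singleton] at hcp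
    subst hcp
    exact ⟨hw n, Finset.mem_image_of_mem y (Finset.mem_univ n)⟩
  have heq : ∀ x : Fin (M+1) → Real.Angle, l1tvCirc (M+1) α w y x = Gfun α M L x := by
    intro x
    unfold l1tvCirc Gfun
    congr 1
    exact Finset.sum_congr rfl (fun n _ => by simp [listTerm, hLdef])
  set cand : Finset (Fin (M+1) → Real.Angle) :=
    Fintype.piFinset (fun _ : Fin (M+1) => S) with hcand
  have hcandne : cand.Nonempty := by
    refine ⟨fun _ => y 0, ?_⟩
    rw [hcand, Fintype.mem_piFinset]
    intro _
    exact Finset.mem_image_of_mem y (Finset.mem_univ 0)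
  obtain ⟨x', hx'mem, hmin⟩ := Finset.exists_min_image cand (fun z => Gfun α M L z) hcandne
  have hx'S : ∀ n, x' n ∈ S := Fintype.mem_piFinset.mp hx'mem
  refine ⟨x', ?_, ?_⟩
  · intro n
    obtain ⟨i, _, hi⟩ := Finset.mem_image.mp (hx'S n)
    exact Or.inl ⟨i, hi⟩
  · intro x
    obtain ⟨z, hzS, hz⟩ := key α hα.le S hS M L hL x
    have hzc : z ∈ cand := by
      rw [hcand, Fintype.mem_piFinset]; exact hzS
    rw [heq, heq]
    exact le_trans (hmin z hzc) hz
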